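/- The parameterized shift map S(z,τ)(t) = z(t-τ), viewed as a map from H¹_{[0]}(-b,T;ℝⁿ) × [0,b] to L²(0,T;ℝⁿ), is continuously Fréchet differentiable, with derivative (DS(z,τ)(h,δ))(t) = h(t-τ) - ż(t-τ)·δ. -/

import Mathlib

open MeasureTheory Real

/-- The `H¹(-b,T)` norm of a function `h` with weak derivative `h'`. -/
noncomputable def H1Norm (n : ℕ) (b T : ℝ) (h h' : ℝ → EuclideanSpace ℝ (Fin n)) : ℝ :=
  Real.sqrt (((eLpNorm h 2 (volume.restrict (Set.Ioo (-b) T))).toReal) ^ 2 +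
    ((eLpNorm h' 2 (volume.restrict (Set.Ioo (-b) T))).toReal) ^ 2)

/-- `h` belongs to `H¹_{[0]}(-b,T)` with weak derivative `h'`: `h` is the primitive of
the square-integrable function `h'`, which vanishes on `(-∞,0]` (so `h = 0` on `[-b,0]`). -/
def MemH1Null (n : ℕ) (b T : ℝ) (h h' : ℝ → EuclideanSpace ℝ (Fin n)) : Prop :=
  (∀ t, h t = ∫ s in (0:ℝ)..t, h' s) ∧ MemLp h' 2 volume ∧
    (∀ t, t ≤ 0 → h' t = 0) ∧ (∀ t, T ≤ t → h' t = 0)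

open Set
open scoped ENNReal NNReal Interval

variable {n : ℕ}

lemma myIntervalIntegrable {w : ℝ → EuclideanSpace ℝ (Fin n)} (hw : MemLp w 2 volume) (a c : ℝ) :
    IntervalIntegrable w volume a c := by
  constructor <;>
  · haveI : IsFiniteMeasure (volume.restrict (Set.Ioc a c)) :=
      ⟨by rw [Measure.restrict_apply_univ]; exact measure_Ioc_lt_top⟩
    haveI : IsFiniteMeasure (volume.restrict (Set.Ioc c a)) :=
      ⟨by rw [Measure.restrict_apply_univ]; exact measure_Ioc_lt_top⟩
    exact MemLp.integrable (by norm_num) (hw.restrict _)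

lemma lemA {w : ℝ → EuclideanSpace ℝ (Fin n)} (hw : MemLp w 2 volume) (a c : ℝ) :
    ‖∫ s in a..c, w s‖ ≤ Real.sqrt |c - a| * (eLpNorm w 2 volume).toReal := by
  set μ' := volume.restrict (Ι a c)
  have hμ' : μ' Set.univ = ENNReal.ofReal |c - a| := by
    rw [Measure.restrict_apply_univ]
    rw [Set.uIoc, Real.volume_Ioc, ← max_sub_min_eq_abs, max_comm, min_comm]
  have hint : Integrable (fun s => w s) μ' := by
    haveI : IsFiniteMeasure μ' := ⟨by rw [hμ']; exact ENNReal.ofReal_lt_top⟩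
    exact MemLp.integrable (by norm_num) (hw.restrict _)
  have h1 : ‖∫ s in a..c, w s‖ ≤ ∫ s in Ι a c, ‖w s‖ :=
    intervalIntegral.norm_integral_le_integral_norm_uIoc
  have h2 : ∫ s in Ι a c, ‖w s‖ = (eLpNorm w 1 μ').toReal := by
    rw [eLpNorm_one_eq_lintegral_enorm, ← ofReal_integral_norm_eq_lintegral_enorm hint,
      ENNReal.toReal_ofReal (integral_nonneg (fun _ => norm_nonneg _))]
  have h3 : eLpNorm w 1 μ' ≤ eLpNorm w 2 μ' * μ' Set.univ ^ (1/2 : ℝ) := by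
    have := eLpNorm_le_eLpNorm_mul_rpow_measure_univ (μ := μ') (p := 1) (q := 2)
      (by norm_num) (hw.aestronglyMeasurable.restrict)
    convert this using 2
    norm_num
  have h4 : eLpNorm w 2 μ' ≤ eLpNorm w 2 volume := eLpNorm_restrict_le _ _ _ _
  have hfin : eLpNorm w 2 volume * ENNReal.ofReal |c - a| ^ (1/2 : ℝ) ≠ ⊤ :=
    ENNReal.mul_ne_top hw.eLpNorm_ne_top (by simp [ENNReal.rpow_eq_top_iff])
  calc ‖∫ s in a..c, w s‖ ≤ (eLpNorm w 1 μ').toReal := h2 ▸ h1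
    _ ≤ (eLpNorm w 2 volume * ENNReal.ofReal |c - a| ^ (1/2 : ℝ)).toReal := by
        apply ENNReal.toReal_mono hfin
        exact h3.trans (by rw [hμ']; exact mul_le_mul_left h4 _)
    _ = Real.sqrt |c - a| * (eLpNorm w 2 volume).toReal := by
        rw [ENNReal.toReal_mul, mul_comm, ← ENNReal.toReal_rpow,
          ENNReal.toReal_ofReal (abs_nonneg _), Real.sqrt_eq_rpow]

lemma lemB {F : ℝ → EuclideanSpace ℝ (Fin n)} {T C : ℝ} (hT : 0 ≤ T) (hC : 0 ≤ C)
    (hF : ∀ t, ‖F t‖ ≤ C) :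
    eLpNorm F 2 (volume.restrict (Ioo 0 T)) ≤ ENNReal.ofReal (Real.sqrt T * C) := by
  refine (eLpNorm_le_of_ae_bound (Filter.Eventually.of_forall hF)).trans ?_
  rw [Measure.restrict_apply_univ, Real.volume_Ioo, sub_zero,
    ENNReal.ofReal_mul (Real.sqrt_nonneg _)]
  gcongr
  rw [Real.sqrt_eq_rpow, ← ENNReal.ofReal_rpow_of_nonneg hT (by norm_num)]
  norm_num

lemma lemT {w : ℝ → EuclideanSpace ℝ (Fin n)} (hw : AEStronglyMeasurable w volume) (a : ℝ) :
    eLpNorm (fun t => w (t - a)) 2 volume = eLpNorm w 2 volume :=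
  eLpNorm_comp_measurePreserving hw (measurePreserving_sub_right volume a)

lemma lemF {w : ℝ → EuclideanSpace ℝ (Fin n)} (hw : StronglyMeasurable w) (T a δ : ℝ) :
    eLpNorm (fun t => ∫ s in (t - a)..(t - a - δ), w s) 2 (volume.restrict (Ioo 0 T))
      ≤ ENNReal.ofReal |δ| * eLpNorm w 2 volume := by
  set X : ℝ≥0∞ := ENNReal.ofReal |δ| with hX
  have hXne : X ≠ ⊤ := ENNReal.ofReal_ne_top
  have hfm : Measurable (fun s => (‖w s‖₊ : ℝ≥0∞) ^ (2 : ℝ)) :=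
    (hw.measurable.nnnorm.coe_nnreal_ennreal).pow measurable_const
  set μT := volume.restrict (Ioo 0 T) with hμT
  have hmin : ∀ t : ℝ, min (t - a) (t - a - δ) = t - a - max δ 0 := by
    intro t; rcases le_total δ 0 with h | h
    · rw [max_eq_right h, min_eq_left (by linarith)]; ring
    · rw [max_eq_left h, min_eq_right (by linarith)]
  have hmax : ∀ t : ℝ, max (t - a) (t - a - δ) = t - a - min δ 0 := by
    intro t; rcases le_total δ 0 with h | h
    · rw [min_eq_left h, max_eq_right (by linarith)]
    · rw [min_eq_right h, max_eq_left (by linarith)]; ring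
  have hvol : ∀ t : ℝ, volume (Ι (t - a) (t - a - δ)) = X := by
    intro t
    rw [Set.uIoc, Real.volume_Ioc, hX]
    congr 1
    rcases le_total 0 δ with h | h
    · rw [max_eq_left (by linarith), min_eq_right (by linarith), abs_of_nonneg h]; ring
    · rw [max_eq_right (by linarith), min_eq_left (by linarith), abs_of_nonpos h]; ring
  -- pointwise bound
  have hpt : ∀ t, ((‖∫ s in (t - a)..(t - a - δ), w s‖₊ : ℝ≥0∞)) ^ (2:ℝ)
      ≤ X * ∫⁻ s in Ι (t - a) (t - a - δ), (‖w s‖₊ : ℝ≥0∞) ^ (2:ℝ) := by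
    intro t
    by_cases hi : IntervalIntegrable w volume (t - a) (t - a - δ)
    · have hint : IntegrableOn w (Ι (t - a) (t - a - δ)) volume := intervalIntegrable_iff.mp hi
      have h1 : ((‖∫ s in (t - a)..(t - a - δ), w s‖₊ : ℝ≥0∞))
          ≤ ∫⁻ s in Ι (t - a) (t - a - δ), (‖w s‖₊ : ℝ≥0∞) := by
        simp only [← enorm_eq_nnnorm]
        rw [← ofReal_integral_norm_eq_lintegral_enorm hint, ← ofReal_norm]
        exact ENNReal.ofReal_le_ofReal intervalIntegral.norm_integral_le_integral_norm_uIoc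
      have h2 : ∫⁻ s in Ι (t - a) (t - a - δ), (‖w s‖₊ : ℝ≥0∞)
          ≤ (∫⁻ s in Ι (t - a) (t - a - δ), (‖w s‖₊ : ℝ≥0∞) ^ (2:ℝ)) ^ (1/2 : ℝ)
            * X ^ (1/2 : ℝ) := by
        have hconj : Real.HolderConjugate 2 2 := Real.HolderConjugate.two_two
        have hCS := ENNReal.lintegral_mul_le_Lp_mul_Lq
          (volume.restrict (Ι (t - a) (t - a - δ))) hconj
          (f := fun s => (‖w s‖₊ : ℝ≥0∞)) (g := fun _ => 1)
          (hw.measurable.nnnorm.coe_nnreal_ennreal.aemeasurable) aemeasurable_const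
        simp only [Pi.mul_apply, mul_one, ENNReal.one_rpow, lintegral_const,
          Measure.restrict_apply_univ, one_mul, hvol t] at hCS
        exact hCS
      calc ((‖∫ s in (t - a)..(t - a - δ), w s‖₊ : ℝ≥0∞)) ^ (2:ℝ)
          ≤ ((∫⁻ s in Ι (t - a) (t - a - δ), (‖w s‖₊ : ℝ≥0∞) ^ (2:ℝ)) ^ (1/2 : ℝ)
              * X ^ (1/2 : ℝ)) ^ (2:ℝ) := by
            gcongr
            exact h1.trans h2
        _ = X * ∫⁻ s in Ι (t - a) (t - a - δ), (‖w s‖₊ : ℝ≥0∞) ^ (2:ℝ) := by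
            rw [ENNReal.mul_rpow_of_nonneg _ _ (by norm_num : (0:ℝ) ≤ 2),
              ← ENNReal.rpow_mul, ← ENNReal.rpow_mul]
            norm_num [mul_comm]
    · rw [intervalIntegral.integral_undef hi]
      simp only [nnnorm_zero, ENNReal.coe_zero]
      rw [ENNReal.zero_rpow_of_pos (by norm_num)]
      exact zero_le
  set K : ℝ → ℝ → ℝ≥0∞ := fun t => (Ι (t - a) (t - a - δ)).indicator
    (fun s => (‖w s‖₊ : ℝ≥0∞) ^ (2:ℝ)) with hK
  have hKeq : ∀ t, ∫⁻ s in Ι (t - a) (t - a - δ), (‖w s‖₊ : ℝ≥0∞) ^ (2:ℝ) = ∫⁻ s, K t s := by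
    intro t
    rw [hK, lintegral_indicator measurableSet_uIoc]
  -- measurability of the kernel
  have hKm : Measurable (Function.uncurry K) := by
    have hS : MeasurableSet {p : ℝ × ℝ | p.1 - a - max δ 0 < p.2 ∧ p.2 ≤ p.1 - a - min δ 0} := by
      apply MeasurableSet.inter
      · exact measurableSet_lt (by fun_prop) measurable_snd
      · exact measurableSet_le measurable_snd (by fun_prop)
    have huncurry : Function.uncurry K =
        Set.indicator {p : ℝ × ℝ | p.1 - a - max δ 0 < p.2 ∧ p.2 ≤ p.1 - a - min δ 0}
          (fun p => (‖w p.2‖₊ : ℝ≥0∞) ^ (2:ℝ)) := by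
      ext p
      simp only [Function.uncurry, hK, Set.indicator, Set.uIoc, Set.mem_Ioc, Set.mem_setOf_eq,
        hmin, hmax]
    rw [huncurry]
    exact (hfm.comp measurable_snd).indicator hS
  -- Tonelli
  have hswap : ∫⁻ t, (∫⁻ s, K t s) ∂μT = ∫⁻ s, (∫⁻ t, K t s ∂μT) :=
    lintegral_lintegral_swap hKm.aemeasurable
  have hinner : ∀ s : ℝ, ∫⁻ t, K t s ∂μT ≤ (‖w s‖₊ : ℝ≥0∞) ^ (2:ℝ) * X := by
    intro s
    have hfun : (fun t => K t s) = Set.indicator (Set.Ico (s + a + min δ 0) (s + a + max δ 0))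
        (fun _ => (‖w s‖₊ : ℝ≥0∞) ^ (2:ℝ)) := by
      ext t
      simp only [hK, Set.indicator, Set.uIoc, Set.mem_Ioc, Set.mem_Ico, hmin, hmax]
      congr 1
      rw [eq_iff_iff]
      constructor <;> intro h <;> exact ⟨by linarith [h.1, h.2], by linarith [h.1, h.2]⟩
    rw [hfun, lintegral_indicator_const measurableSet_Ico]
    gcongr
    rw [hμT, Measure.restrict_apply measurableSet_Ico]
    refine (measure_mono Set.inter_subset_left).trans ?_
    rw [Real.volume_Ico, hX]
    apply ENNReal.ofReal_le_ofReal
    have habs : max δ 0 - min δ 0 = |δ| := by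
      rcases le_total 0 δ with h | h
      · rw [max_eq_left h, min_eq_right h, abs_of_nonneg h]; ring
      · rw [max_eq_right h, min_eq_left h, abs_of_nonpos h]; ring
    linarith [habs]
  -- assemble
  have hlin : ∫⁻ t, ((‖∫ s in (t - a)..(t - a - δ), w s‖₊ : ℝ≥0∞)) ^ (2:ℝ) ∂μT
      ≤ X * X * ∫⁻ s, (‖w s‖₊ : ℝ≥0∞) ^ (2:ℝ) := by
    calc ∫⁻ t, ((‖∫ s in (t - a)..(t - a - δ), w s‖₊ : ℝ≥0∞)) ^ (2:ℝ) ∂μT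
        ≤ ∫⁻ t, (X * ∫⁻ s, K t s) ∂μT := by
          refine lintegral_mono fun t => ?_
          rw [← hKeq t]; exact hpt t
      _ = X * ∫⁻ t, (∫⁻ s, K t s) ∂μT := lintegral_const_mul' _ _ hXne
      _ = X * ∫⁻ s, (∫⁻ t, K t s ∂μT) := by rw [hswap]
      _ ≤ X * ∫⁻ s, ((‖w s‖₊ : ℝ≥0∞) ^ (2:ℝ) * X) := by gcongr with s; exact hinner s
      _ = X * ((∫⁻ s, (‖w s‖₊ : ℝ≥0∞) ^ (2:ℝ)) * X) := by rw [lintegral_mul_const' _ _ hXne]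
      _ = X * X * ∫⁻ s, (‖w s‖₊ : ℝ≥0∞) ^ (2:ℝ) := by ring
  have help : eLpNorm (fun t => ∫ s in (t - a)..(t - a - δ), w s) 2 μT
      = (∫⁻ t, ((‖∫ s in (t - a)..(t - a - δ), w s‖₊ : ℝ≥0∞)) ^ (2:ℝ) ∂μT) ^ (1/2 : ℝ) := by
    rw [eLpNorm_eq_lintegral_rpow_enorm_toReal (by norm_num) (by norm_num)]
    norm_num
    simp only [enorm_eq_nnnorm]
  have hw2 : eLpNorm w 2 volume = (∫⁻ s, (‖w s‖₊ : ℝ≥0∞) ^ (2:ℝ)) ^ (1/2 : ℝ) := by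
    rw [eLpNorm_eq_lintegral_rpow_enorm_toReal (by norm_num) (by norm_num)]
    norm_num
    simp only [enorm_eq_nnnorm]
  rw [help, hw2]
  calc (∫⁻ t, ((‖∫ s in (t - a)..(t - a - δ), w s‖₊ : ℝ≥0∞)) ^ (2:ℝ) ∂μT) ^ (1/2 : ℝ)
      ≤ (X * X * ∫⁻ s, (‖w s‖₊ : ℝ≥0∞) ^ (2:ℝ)) ^ (1/2 : ℝ) := by gcongr
    _ = X * (∫⁻ s, (‖w s‖₊ : ℝ≥0∞) ^ (2:ℝ)) ^ (1/2 : ℝ) := by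
        rw [ENNReal.mul_rpow_of_nonneg _ _ (by norm_num : (0:ℝ) ≤ 1/2)]
        congr 1
        rw [show X * X = X ^ (2:ℝ) by rw [← pow_two, ← ENNReal.rpow_natCast]; norm_num,
          ← ENNReal.rpow_mul]
        norm_num

lemma norm_restrict_full {b T : ℝ} (hb : 0 < b) {w : ℝ → EuclideanSpace ℝ (Fin n)}
    (h0 : ∀ t, t ≤ 0 → w t = 0) (hT : ∀ t, T ≤ t → w t = 0) :
    eLpNorm w 2 volume = eLpNorm w 2 (volume.restrict (Set.Ioo (-b) T)) := by
  rw [← eLpNorm_indicator_eq_eLpNorm_restrict measurableSet_Ioo]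
  congr 1
  funext t
  by_cases hmem : t ∈ Set.Ioo (-b) T
  · rw [Set.indicator_of_mem hmem]
  · rw [Set.indicator_of_notMem hmem]
    rw [Set.mem_Ioo, not_and_or] at hmem
    rcases hmem with hc | hc
    · exact h0 t (by push_neg at hc; linarith)
    · exact hT t (by push_neg at hc; linarith)

lemma deriv_norm_le_H1Norm {b T : ℝ} (hb : 0 < b) {h w : ℝ → EuclideanSpace ℝ (Fin n)}
    (h0 : ∀ t, t ≤ 0 → w t = 0) (hT : ∀ t, T ≤ t → w t = 0) :
    (eLpNorm w 2 volume).toReal ≤ H1Norm n b T h w := by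
  rw [norm_restrict_full hb h0 hT, H1Norm]
  set x := (eLpNorm h 2 (volume.restrict (Set.Ioo (-b) T))).toReal
  set y := (eLpNorm w 2 (volume.restrict (Set.Ioo (-b) T))).toReal
  calc y = Real.sqrt (y ^ 2) := (Real.sqrt_sq ENNReal.toReal_nonneg).symm
    _ ≤ Real.sqrt (x ^ 2 + y ^ 2) := Real.sqrt_le_sqrt (by nlinarith [sq_nonneg x])

lemma H1Norm_nonneg (b T : ℝ) (h h' : ℝ → EuclideanSpace ℝ (Fin n)) :
    0 ≤ H1Norm n b T h h' := Real.sqrt_nonneg _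

lemma contIntShift {w : ℝ → EuclideanSpace ℝ (Fin n)} (hw : MemLp w 2 volume) (a δ : ℝ) :
    Continuous (fun t => ∫ s in (t - a)..(t - a - δ), w s) := by
  have hW : Continuous (fun u => ∫ s in (0:ℝ)..u, w s) :=
    intervalIntegral.continuous_primitive (fun a b => myIntervalIntegrable hw a b) 0
  have heq : (fun t => ∫ s in (t - a)..(t - a - δ), w s)
      = fun t => (∫ s in (0:ℝ)..(t - a - δ), w s) - ∫ s in (0:ℝ)..(t - a), w s := by
    funext t
    rw [intervalIntegral.integral_interval_sub_left (myIntervalIntegrable hw 0 _)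
      (myIntervalIntegrable hw 0 _)]
  rw [heq]
  exact (hW.comp (by fun_prop)).sub (hW.comp (by fun_prop))

lemma sqrtT_aux {sT ε : ℝ} (hsT : 0 ≤ sT) (hε : 0 < ε) {u : ℝ}
    (hu : u ≤ ε / (4 * (sT + 1))) : sT * u ≤ ε / 4 := by
  have h1 : sT * u ≤ sT * (ε / (4 * (sT + 1))) := by
    apply mul_le_mul_of_nonneg_left hu hsT
  refine h1.trans ?_
  rw [mul_div_assoc', div_le_div_iff₀ (by positivity) (by norm_num)]
  nlinarith


set_option maxHeartbeats 1000000 in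
/-- the parameterized shift map `S(z,τ)(t) = z(t-τ)` is continuously
Fréchet differentiable from `H¹_{[0]}(-b,T;ℝⁿ) × [0,b]` to `L²(0,T;ℝⁿ)`, with
derivative `(DS(z,τ)(h,δ))(t) = h(t-τ) - ż(t-τ) δ`.  The first clause expresses
Fréchet differentiability at `(z,τ)` (the remainder is `o(‖h‖_{H¹}+|δ|)`), the second
clause expresses continuity of the derivative in `(z,τ)` (in the operator norm). -/
theorem shift_map_C1 (n : ℕ) (b T : ℝ) (hb : 0 < b) (hT : 0 < T)
    (z z' : ℝ → EuclideanSpace ℝ (Fin n)) (hz : MemH1Null n b T z z')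
    (τ : ℝ) (hτ : τ ∈ Set.Icc 0 b) :
    (∀ ε > (0:ℝ), ∃ η > (0:ℝ), ∀ h h' δ, MemH1Null n b T h h' →
      τ + δ ∈ Set.Icc (0:ℝ) b → H1Norm n b T h h' + |δ| ≤ η →
      (eLpNorm (fun t => (z (t - τ - δ) + h (t - τ - δ)) - z (t - τ)
          - (h (t - τ) - δ • z' (t - τ))) 2
        (volume.restrict (Set.Ioo 0 T))).toReal ≤ ε * (H1Norm n b T h h' + |δ|)) ∧
    (∀ ε > (0:ℝ), ∃ η > (0:ℝ), ∀ y y' σ, MemH1Null n b T y y' → σ ∈ Set.Icc (0:ℝ) b →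
      H1Norm n b T (z - y) (z' - y') + |τ - σ| ≤ η →
      ∀ h h' δ, MemH1Null n b T h h' → H1Norm n b T h h' + |δ| ≤ 1 →
      (eLpNorm (fun t => (h (t - τ) - δ • z' (t - τ)) - (h (t - σ) - δ • y' (t - σ))) 2
        (volume.restrict (Set.Ioo 0 T))).toReal ≤ ε) := by
  obtain ⟨hzdef, hz2, hz0, hzT⟩ := hz
  set μT := volume.restrict (Set.Ioo (0:ℝ) T) with hμT
  set sT := Real.sqrt T with hsTdef
  have hsT0 : 0 ≤ sT := Real.sqrt_nonneg _
  -- measurable representative of z'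
  set z'' : ℝ → EuclideanSpace ℝ (Fin n) := hz2.aestronglyMeasurable.mk z' with hz''def
  have hz''sm : StronglyMeasurable z'' := hz2.aestronglyMeasurable.stronglyMeasurable_mk
  have hzae : z' =ᵐ[volume] z'' := hz2.aestronglyMeasurable.ae_eq_mk
  have hz''2 : MemLp z'' 2 volume := (memLp_congr_ae hzae).mp hz2
  have hshift : ∀ c : ℝ, (fun t : ℝ => z' (t - c)) =ᵐ[μT] (fun t : ℝ => z'' (t - c)) := by
    intro c
    have h1 := (measurePreserving_sub_right volume c).quasiMeasurePreserving.ae_eq_comp hzae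
    exact (h1 : (fun t : ℝ => z' (t - c)) =ᵐ[volume] fun t => z'' (t - c)).filter_mono
      (ae_mono Measure.restrict_le_self)
  constructor
  · -- differentiability
    intro ε hε
    set ε₂ := ε / (4 * (sT + 1)) with hε₂def
    have hε₂ : 0 < ε₂ := by positivity
    obtain ⟨g, hgsupp, hgapprox, hgcont, hg2⟩ :=
      hz2.exists_hasCompactSupport_eLpNorm_sub_le (by norm_num : (2:ℝ≥0∞) ≠ ∞)
        (ε := ENNReal.ofReal (ε/8)) (ne_of_gt (ENNReal.ofReal_pos.mpr (by positivity)))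
    have hgu : UniformContinuous g := hgsupp.uniformContinuous_of_continuous hgcont
    obtain ⟨η₀, hη₀, hUC⟩ := Metric.uniformContinuous_iff.mp hgu ε₂ hε₂
    set w : ℝ → EuclideanSpace ℝ (Fin n) := fun s => z'' s - g s with hwdef
    have hwsm : StronglyMeasurable w := hz''sm.sub hgcont.stronglyMeasurable
    have hw2 : MemLp w 2 volume := hz''2.sub hg2
    have hwnorm : eLpNorm w 2 volume ≤ ENNReal.ofReal (ε/8) := by
      refine le_trans (le_of_eq (eLpNorm_congr_ae ?_)) hgapprox
      filter_upwards [hzae] with s hs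
      simp [hwdef, hs]
    set η := min (min (η₀/2) 1) (ε₂ ^ 2) with hηdef
    have hη : 0 < η := by positivity
    refine ⟨η, hη, ?_⟩
    intro h h' δ hmem hδmem hsmall
    obtain ⟨hhdef, hh2, hh0, hhT⟩ := hmem
    set H := H1Norm n b T h h' with hHdef
    have hH0 : 0 ≤ H := Real.sqrt_nonneg _
    have hδη : |δ| ≤ η := le_trans (by linarith [abs_nonneg δ]) hsmall
    have hNh : (eLpNorm h' 2 volume).toReal ≤ H := deriv_norm_le_H1Norm hb hh0 hhT
    set Nh := (eLpNorm h' 2 volume).toReal with hNhdef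
    have hNh0 : 0 ≤ Nh := ENNReal.toReal_nonneg
    -- the four pieces
    set FA : ℝ → EuclideanSpace ℝ (Fin n) :=
      fun t => ∫ s in (t - τ)..(t - τ - δ), (g s - g (t - τ)) with hFA
    set FB : ℝ → EuclideanSpace ℝ (Fin n) :=
      fun t => ∫ s in (t - τ)..(t - τ - δ), w s with hFB
    set FC : ℝ → EuclideanSpace ℝ (Fin n) := fun t => δ • w (t - τ) with hFC
    set FD : ℝ → EuclideanSpace ℝ (Fin n) :=
      fun t => ∫ s in (t - τ)..(t - τ - δ), h' s with hFD
    -- a.e. identity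
    have hae : (fun t => (z (t - τ - δ) + h (t - τ - δ)) - z (t - τ)
        - (h (t - τ) - δ • z' (t - τ)))
        =ᵐ[μT] (FA + FB + FC + FD) := by
      filter_upwards [hshift τ] with t ht
      have ezint : ∫ s in (t - τ)..(t - τ - δ), z' s = ∫ s in (t - τ)..(t - τ - δ), z'' s :=
        intervalIntegral.integral_congr_ae (by filter_upwards [hzae] with s hs _; exact hs)
      have ez : z (t - τ - δ) - z (t - τ) = ∫ s in (t - τ)..(t - τ - δ), z'' s := by
        rw [hzdef (t - τ - δ), hzdef (t - τ), ← ezint]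
        exact intervalIntegral.integral_interval_sub_left (myIntervalIntegrable hz2 0 _)
          (myIntervalIntegrable hz2 0 _)
      have eh : h (t - τ - δ) - h (t - τ) = FD t := by
        show _ = ∫ s in (t - τ)..(t - τ - δ), h' s
        rw [hhdef (t - τ - δ), hhdef (t - τ)]
        exact intervalIntegral.integral_interval_sub_left (myIntervalIntegrable hh2 0 _)
          (myIntervalIntegrable hh2 0 _)
      have esplit : ∫ s in (t - τ)..(t - τ - δ), z'' s
          = (∫ s in (t - τ)..(t - τ - δ), g s) + ∫ s in (t - τ)..(t - τ - δ), w s := by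
        rw [← intervalIntegral.integral_add (hgcont.intervalIntegrable _ _)
          (myIntervalIntegrable hw2 _ _)]
        apply intervalIntegral.integral_congr
        intro s _
        simp [hwdef]
      have eg : ∫ s in (t - τ)..(t - τ - δ), g s = FA t - δ • g (t - τ) := by
        show _ = (∫ s in (t - τ)..(t - τ - δ), (g s - g (t - τ))) - δ • g (t - τ)
        rw [intervalIntegral.integral_sub (hgcont.intervalIntegrable _ _)
          intervalIntegrable_const, intervalIntegral.integral_const,
          show t - τ - δ - (t - τ) = -δ by ring]
        module
      have key : z (t - τ - δ) - z (t - τ) + δ • z' (t - τ) = FA t + FB t + FC t := by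
        rw [ez, esplit, eg, ht, show z'' (t - τ) = g (t - τ) + w (t - τ) by simp [hwdef],
          smul_add]
        simp only [hFC, hFB]
        abel
      calc (z (t - τ - δ) + h (t - τ - δ)) - z (t - τ) - (h (t - τ) - δ • z' (t - τ))
          = (z (t - τ - δ) - z (t - τ) + δ • z' (t - τ)) + (h (t - τ - δ) - h (t - τ)) := by
            abel
        _ = (FA t + FB t + FC t) + FD t := by rw [key, eh]
        _ = (FA + FB + FC + FD) t := by simp only [Pi.add_apply]
    -- measurability
    have hmA : AEStronglyMeasurable FA μT := by
      have hrw : FA = fun t => (∫ s in (t - τ)..(t - τ - δ), g s) + δ • g (t - τ) := by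
        funext t
        show (∫ s in (t - τ)..(t - τ - δ), (g s - g (t - τ))) = _
        rw [intervalIntegral.integral_sub (hgcont.intervalIntegrable _ _)
          intervalIntegrable_const, intervalIntegral.integral_const,
          show t - τ - δ - (t - τ) = -δ by ring]
        module
      rw [hrw]
      exact ((contIntShift hg2 τ δ).add
        ((hgcont.comp (by fun_prop)).const_smul δ)).aestronglyMeasurable.restrict
    have hmB : AEStronglyMeasurable FB μT := (contIntShift hw2 τ δ).aestronglyMeasurable.restrict
    have hmC : AEStronglyMeasurable FC μT :=
      ((hwsm.comp_measurable (measurable_id.sub_const τ)).const_smul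
        δ).aestronglyMeasurable.restrict
    have hmD : AEStronglyMeasurable FD μT := (contIntShift hh2 τ δ).aestronglyMeasurable.restrict
    -- bounds
    have hδη₀ : |δ| < η₀ :=
      lt_of_le_of_lt (hδη.trans ((min_le_left _ _).trans (min_le_left _ _))) (by linarith)
    have hA : eLpNorm FA 2 μT ≤ ENNReal.ofReal (sT * (ε₂ * |δ|)) := by
      refine lemB hT.le (by positivity) ?_
      intro t
      show ‖∫ s in (t - τ)..(t - τ - δ), (g s - g (t - τ))‖ ≤ _
      have hb1 : ∀ x ∈ Ι (t - τ) (t - τ - δ), ‖g x - g (t - τ)‖ ≤ ε₂ := by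
        intro x hx
        rw [Set.uIoc] at hx
        obtain ⟨hx1, hx2⟩ := hx
        have hlo : t - τ - |δ| ≤ min (t - τ) (t - τ - δ) :=
          le_min (by linarith [abs_nonneg δ]) (by linarith [le_abs_self δ])
        have hhi : max (t - τ) (t - τ - δ) ≤ t - τ + |δ| :=
          max_le (by linarith [abs_nonneg δ]) (by linarith [neg_abs_le δ])
        have hxd : dist x (t - τ) < η₀ := by
          rw [Real.dist_eq]
          have : |x - (t - τ)| ≤ |δ| := abs_le.mpr ⟨by linarith, by linarith⟩
          linarith
        exact le_of_lt (hUC hxd)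
      refine (intervalIntegral.norm_integral_le_of_norm_le_const hb1).trans ?_
      rw [show t - τ - δ - (t - τ) = -δ by ring, abs_neg]
    have hB : eLpNorm FB 2 μT ≤ ENNReal.ofReal |δ| * ENNReal.ofReal (ε/8) :=
      (lemF hwsm T τ δ).trans (mul_le_mul_right hwnorm _)
    have hC : eLpNorm FC 2 μT ≤ ENNReal.ofReal |δ| * ENNReal.ofReal (ε/8) := by
      have h1 : eLpNorm FC 2 μT ≤ eLpNorm FC 2 volume :=
        eLpNorm_mono_measure _ Measure.restrict_le_self
      have h2 : eLpNorm FC 2 volume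
          = (‖δ‖₊ : ℝ≥0∞) * eLpNorm (fun t => w (t - τ)) 2 volume := by
        rw [hFC, show (fun t => δ • w (t - τ)) = δ • (fun t => w (t - τ)) from rfl,
          eLpNorm_const_smul, enorm_eq_nnnorm]
      refine h1.trans ?_
      rw [h2, lemT hwsm.aestronglyMeasurable τ]
      have h3 : (‖δ‖₊ : ℝ≥0∞) = ENNReal.ofReal |δ| := by
        rw [← Real.enorm_eq_ofReal_abs, enorm_eq_nnnorm]
      rw [h3]
      exact mul_le_mul_right hwnorm _
    have hD : eLpNorm FD 2 μT ≤ ENNReal.ofReal (sT * (Real.sqrt |δ| * Nh)) := by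
      refine lemB hT.le (by positivity) ?_
      intro t
      show ‖∫ s in (t - τ)..(t - τ - δ), h' s‖ ≤ _
      refine (lemA hh2 (t - τ) (t - τ - δ)).trans ?_
      rw [show t - τ - δ - (t - τ) = -δ by ring, abs_neg]
    -- combine
    have tri : eLpNorm (FA + FB + FC + FD) 2 μT
        ≤ eLpNorm FA 2 μT + eLpNorm FB 2 μT + eLpNorm FC 2 μT + eLpNorm FD 2 μT := by
      calc eLpNorm (FA + FB + FC + FD) 2 μT
          ≤ eLpNorm (FA + FB + FC) 2 μT + eLpNorm FD 2 μT :=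
            eLpNorm_add_le ((hmA.add hmB).add hmC) hmD one_le_two
        _ ≤ (eLpNorm (FA + FB) 2 μT + eLpNorm FC 2 μT) + eLpNorm FD 2 μT :=
            add_le_add_left (eLpNorm_add_le (hmA.add hmB) hmC one_le_two) _
        _ ≤ ((eLpNorm FA 2 μT + eLpNorm FB 2 μT) + eLpNorm FC 2 μT) + eLpNorm FD 2 μT :=
            add_le_add_left (add_le_add_left (eLpNorm_add_le hmA hmB one_le_two) _) _
    have htotal : eLpNorm (fun t => (z (t - τ - δ) + h (t - τ - δ)) - z (t - τ)
        - (h (t - τ) - δ • z' (t - τ))) 2 μT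
        ≤ ENNReal.ofReal (sT * (ε₂ * |δ|) + |δ| * (ε/8) + |δ| * (ε/8)
            + sT * (Real.sqrt |δ| * Nh)) := by
      rw [eLpNorm_congr_ae hae]
      refine tri.trans ?_
      rw [ENNReal.ofReal_add (by positivity) (by positivity),
        ENNReal.ofReal_add (by positivity) (by positivity),
        ENNReal.ofReal_add (by positivity) (by positivity)]
      refine add_le_add (add_le_add (add_le_add hA ?_) ?_) hD
      · exact hB.trans (le_of_eq (ENNReal.ofReal_mul (abs_nonneg δ)).symm)
      · exact hC.trans (le_of_eq (ENNReal.ofReal_mul (abs_nonneg δ)).symm)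
    -- real arithmetic
    have hsqδ : Real.sqrt |δ| ≤ ε₂ := by
      have h1 : |δ| ≤ ε₂ ^ 2 := hδη.trans (min_le_right _ _)
      calc Real.sqrt |δ| ≤ Real.sqrt (ε₂ ^ 2) := Real.sqrt_le_sqrt h1
        _ = ε₂ := Real.sqrt_sq hε₂.le
    have hsTε₂ : sT * ε₂ ≤ ε / 4 := sqrtT_aux hsT0 hε le_rfl
    have hreal : sT * (ε₂ * |δ|) + |δ| * (ε/8) + |δ| * (ε/8)
        + sT * (Real.sqrt |δ| * Nh) ≤ ε * (H + |δ|) := by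
      have hδH : |δ| ≤ H + |δ| := by linarith [abs_nonneg δ]
      have a1 : sT * (ε₂ * |δ|) ≤ (ε/4) * (H + |δ|) := by
        calc sT * (ε₂ * |δ|) = (sT * ε₂) * |δ| := by ring
          _ ≤ (ε/4) * (H + |δ|) :=
            mul_le_mul hsTε₂ hδH (abs_nonneg δ) (by positivity)
      have a2 : |δ| * (ε/8) ≤ (H + |δ|) * (ε/8) := by
        apply mul_le_mul_of_nonneg_right hδH (by positivity)
      have a4 : sT * (Real.sqrt |δ| * Nh) ≤ (ε/4) * (H + |δ|) := by
        calc sT * (Real.sqrt |δ| * Nh) = (sT * Real.sqrt |δ|) * Nh := by ring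
          _ ≤ (ε/4) * (H + |δ|) := by
            apply mul_le_mul (sqrtT_aux hsT0 hε hsqδ) (hNh.trans (by linarith [abs_nonneg δ]))
              hNh0 (by positivity)
      linarith [a1, a2, a4, mul_nonneg hε.le hH0, mul_nonneg hε.le (abs_nonneg δ)]
    calc (eLpNorm (fun t => (z (t - τ - δ) + h (t - τ - δ)) - z (t - τ)
        - (h (t - τ) - δ • z' (t - τ))) 2 μT).toReal
        ≤ sT * (ε₂ * |δ|) + |δ| * (ε/8) + |δ| * (ε/8) + sT * (Real.sqrt |δ| * Nh) :=
          ENNReal.toReal_le_of_le_ofReal (by positivity) htotal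
      _ ≤ ε * (H + |δ|) := hreal
  · -- continuity of the derivative
    intro ε hε
    set ε₂ := ε / (4 * (sT + 1)) with hε₂def
    have hε₂ : 0 < ε₂ := by positivity
    obtain ⟨g, hgsupp, hgapprox, hgcont, hg2⟩ :=
      hz2.exists_hasCompactSupport_eLpNorm_sub_le (by norm_num : (2:ℝ≥0∞) ≠ ∞)
        (ε := ENNReal.ofReal (ε/8)) (ne_of_gt (ENNReal.ofReal_pos.mpr (by positivity)))
    have hgu : UniformContinuous g := hgsupp.uniformContinuous_of_continuous hgcont
    obtain ⟨η₀, hη₀, hUC⟩ := Metric.uniformContinuous_iff.mp hgu ε₂ hε₂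
    set w : ℝ → EuclideanSpace ℝ (Fin n) := fun s => z'' s - g s with hwdef
    have hwsm : StronglyMeasurable w := hz''sm.sub hgcont.stronglyMeasurable
    have hw2 : MemLp w 2 volume := hz''2.sub hg2
    have hwnorm : eLpNorm w 2 volume ≤ ENNReal.ofReal (ε/8) := by
      refine le_trans (le_of_eq (eLpNorm_congr_ae ?_)) hgapprox
      filter_upwards [hzae] with s hs
      simp [hwdef, hs]
    set η := min (min (η₀/2) (ε/4)) (ε₂ ^ 2) with hηdef
    have hη : 0 < η := by positivity
    refine ⟨η, hη, ?_⟩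
    intro y y' σ hymem hσ hclose h h' δ hmem hsmall
    obtain ⟨hydef, hy2, hy0, hyT⟩ := hymem
    obtain ⟨hhdef, hh2, hh0, hhT⟩ := hmem
    have hH0 : 0 ≤ H1Norm n b T h h' := Real.sqrt_nonneg _
    have hHzy0 : 0 ≤ H1Norm n b T (z - y) (z' - y') := Real.sqrt_nonneg _
    have hτσ : |τ - σ| ≤ η := by linarith
    have hδ1 : |δ| ≤ 1 := by linarith
    have hNh : (eLpNorm h' 2 volume).toReal ≤ 1 :=
      (deriv_norm_le_H1Norm hb hh0 hhT).trans (by linarith [abs_nonneg δ])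
    have hzy2 : MemLp (z' - y') 2 volume := hz2.sub hy2
    have hzyH : (eLpNorm (z' - y') 2 volume).toReal ≤ η := by
      refine (deriv_norm_le_H1Norm (h := z - y) hb ?_ ?_).trans (by linarith [abs_nonneg (τ - σ)])
      · intro t ht; simp [Pi.sub_apply, hz0 t ht, hy0 t ht]
      · intro t ht; simp [Pi.sub_apply, hzT t ht, hyT t ht]
    have hzyofReal : eLpNorm (z' - y') 2 volume ≤ ENNReal.ofReal η := by
      rw [← ENNReal.ofReal_toReal hzy2.eLpNorm_ne_top]
      exact ENNReal.ofReal_le_ofReal hzyH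
    have hδE : (‖δ‖₊ : ℝ≥0∞) ≤ 1 := by
      rw [← enorm_eq_nnnorm, Real.enorm_eq_ofReal_abs]
      exact ENNReal.ofReal_le_one.mpr hδ1
    -- pieces
    set P : ℝ → EuclideanSpace ℝ (Fin n) := fun t => ∫ s in (t - σ)..(t - τ), h' s with hP
    set Q1 : ℝ → EuclideanSpace ℝ (Fin n) := fun t => δ • (y' (t - σ) - z' (t - σ)) with hQ1
    set Q2 : ℝ → EuclideanSpace ℝ (Fin n) := fun t => δ • (g (t - σ) - g (t - τ)) with hQ2
    set Q3 : ℝ → EuclideanSpace ℝ (Fin n) := fun t => δ • (w (t - σ) - w (t - τ)) with hQ3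
    -- a.e. identity
    have hae : (fun t => (h (t - τ) - δ • z' (t - τ)) - (h (t - σ) - δ • y' (t - σ)))
        =ᵐ[μT] (P + Q1 + Q2 + Q3) := by
      filter_upwards [hshift τ, hshift σ] with t htτ htσ
      have ehh : h (t - τ) - h (t - σ) = P t := by
        show _ = ∫ s in (t - σ)..(t - τ), h' s
        rw [hhdef (t - τ), hhdef (t - σ)]
        exact intervalIntegral.integral_interval_sub_left (myIntervalIntegrable hh2 0 _)
          (myIntervalIntegrable hh2 0 _)
      have ezz : δ • z' (t - σ) - δ • z' (t - τ) = Q2 t + Q3 t := by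
        rw [htτ, htσ, show z'' (t - σ) = g (t - σ) + w (t - σ) by simp [hwdef],
          show z'' (t - τ) = g (t - τ) + w (t - τ) by simp [hwdef] ]
        simp only [hQ2, hQ3, smul_sub, smul_add]
        abel
      have split : (h (t - τ) - δ • z' (t - τ)) - (h (t - σ) - δ • y' (t - σ))
          = (h (t - τ) - h (t - σ)) + (δ • y' (t - σ) - δ • z' (t - σ))
            + (δ • z' (t - σ) - δ • z' (t - τ)) := by abel
      rw [split, ehh, ezz]
      have : δ • y' (t - σ) - δ • z' (t - σ) = Q1 t := by
        simp only [hQ1, smul_sub]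
      rw [this]
      simp only [Pi.add_apply]
      abel
    -- measurability
    have hmP : AEStronglyMeasurable P μT := by
      have hPrw : P = fun t => ∫ s in (t - σ)..(t - σ - (τ - σ)), h' s := by
        funext t
        rw [show t - σ - (τ - σ) = t - τ by ring]
      rw [hPrw]
      exact (contIntShift hh2 σ (τ - σ)).aestronglyMeasurable.restrict
    have hmQ1 : AEStronglyMeasurable Q1 μT := by
      have h1 : AEStronglyMeasurable (fun t : ℝ => y' (t - σ) - z' (t - σ)) volume :=
        ((hy2.aestronglyMeasurable.sub hz2.aestronglyMeasurable).comp_quasiMeasurePreserving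
          (measurePreserving_sub_right volume σ).quasiMeasurePreserving)
      exact (h1.const_smul δ).restrict
    have hmQ2 : AEStronglyMeasurable Q2 μT :=
      (((hgcont.comp (by fun_prop)).sub (hgcont.comp (by fun_prop))).const_smul
        δ).aestronglyMeasurable.restrict
    have hmQ3 : AEStronglyMeasurable Q3 μT :=
      (((hwsm.comp_measurable (measurable_id.sub_const σ)).sub
        (hwsm.comp_measurable (measurable_id.sub_const τ))).const_smul
          δ).aestronglyMeasurable.restrict
    -- bounds
    have hsqη : Real.sqrt η ≤ ε₂ := by
      calc Real.sqrt η ≤ Real.sqrt (ε₂ ^ 2) := Real.sqrt_le_sqrt (min_le_right _ _)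
        _ = ε₂ := Real.sqrt_sq hε₂.le
    have hPb : eLpNorm P 2 μT ≤ ENNReal.ofReal (sT * Real.sqrt η) := by
      refine lemB hT.le (by positivity) ?_
      intro t
      show ‖∫ s in (t - σ)..(t - τ), h' s‖ ≤ _
      refine (lemA hh2 (t - σ) (t - τ)).trans ?_
      have e1 : |t - τ - (t - σ)| = |τ - σ| := by
        rw [show t - τ - (t - σ) = -(τ - σ) by ring, abs_neg]
      rw [e1]
      calc Real.sqrt |τ - σ| * (eLpNorm h' 2 volume).toReal
          ≤ Real.sqrt η * 1 :=
            mul_le_mul (Real.sqrt_le_sqrt hτσ) hNh ENNReal.toReal_nonneg (Real.sqrt_nonneg _)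
        _ = Real.sqrt η := mul_one _
    have hQ1b : eLpNorm Q1 2 μT ≤ ENNReal.ofReal η := by
      have h1 : eLpNorm Q1 2 μT ≤ eLpNorm Q1 2 volume :=
        eLpNorm_mono_measure _ Measure.restrict_le_self
      have h2 : eLpNorm Q1 2 volume = (‖δ‖₊ : ℝ≥0∞) * eLpNorm (z' - y') 2 volume := by
        have e1 : eLpNorm Q1 2 volume
            = (‖δ‖₊ : ℝ≥0∞) * eLpNorm (fun t : ℝ => (y' - z') (t - σ)) 2 volume := by
          rw [show Q1 = δ • (fun t : ℝ => (y' - z') (t - σ)) from rfl, eLpNorm_const_smul, enorm_eq_nnnorm]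
        rw [e1, lemT (hy2.sub hz2).aestronglyMeasurable σ, show y' - z' = -(z' - y') from
          (neg_sub z' y').symm, eLpNorm_neg]
      refine h1.trans (h2.le.trans ?_)
      calc (‖δ‖₊ : ℝ≥0∞) * eLpNorm (z' - y') 2 volume
          ≤ 1 * eLpNorm (z' - y') 2 volume := mul_le_mul_left hδE _
        _ ≤ ENNReal.ofReal η := by rw [one_mul]; exact hzyofReal
    have hQ2b : eLpNorm Q2 2 μT ≤ ENNReal.ofReal (sT * ε₂) := by
      refine lemB hT.le hε₂.le ?_
      intro t
      show ‖δ • (g (t - σ) - g (t - τ))‖ ≤ _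
      rw [norm_smul, Real.norm_eq_abs]
      have hUCb : ‖g (t - σ) - g (t - τ)‖ ≤ ε₂ := by
        have hd : dist (t - σ) (t - τ) < η₀ := by
          rw [Real.dist_eq, show t - σ - (t - τ) = τ - σ by ring]
          have : η ≤ η₀ / 2 := (min_le_left _ _).trans (min_le_left _ _)
          linarith
        exact le_of_lt (hUC hd)
      calc |δ| * ‖g (t - σ) - g (t - τ)‖ ≤ 1 * ε₂ :=
            mul_le_mul hδ1 hUCb (norm_nonneg _) (by norm_num)
        _ = ε₂ := one_mul _
    have hwshift : ∀ c : ℝ, eLpNorm (fun t : ℝ => δ • w (t - c)) 2 μT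
        ≤ ENNReal.ofReal (ε/8) := by
      intro c
      have h1 : eLpNorm (fun t : ℝ => δ • w (t - c)) 2 μT
          ≤ eLpNorm (fun t : ℝ => δ • w (t - c)) 2 volume :=
        eLpNorm_mono_measure _ Measure.restrict_le_self
      refine h1.trans ?_
      rw [show (fun t : ℝ => δ • w (t - c)) = δ • (fun t : ℝ => w (t - c)) from rfl,
        eLpNorm_const_smul, enorm_eq_nnnorm, lemT hwsm.aestronglyMeasurable c]
      calc (‖δ‖₊ : ℝ≥0∞) * eLpNorm w 2 volume ≤ 1 * ENNReal.ofReal (ε/8) :=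
            mul_le_mul' hδE hwnorm
        _ = ENNReal.ofReal (ε/8) := one_mul _
    have hQ3b : eLpNorm Q3 2 μT ≤ ENNReal.ofReal (ε/8) + ENNReal.ofReal (ε/8) := by
      have hsub : eLpNorm Q3 2 μT
          ≤ eLpNorm (fun t : ℝ => δ • w (t - σ)) 2 μT
            + eLpNorm (fun t : ℝ => δ • w (t - τ)) 2 μT := by
        have hQ3rw : Q3 = fun t : ℝ => δ • w (t - σ) - δ • w (t - τ) := by
          funext t; simp only [hQ3, smul_sub]
        rw [hQ3rw]
        exact eLpNorm_sub_le
          ((hwsm.comp_measurable (measurable_id.sub_const σ)).const_smul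
            δ).aestronglyMeasurable.restrict
          ((hwsm.comp_measurable (measurable_id.sub_const τ)).const_smul
            δ).aestronglyMeasurable.restrict one_le_two
      exact hsub.trans (add_le_add (hwshift σ) (hwshift τ))
    -- combine
    have tri : eLpNorm (P + Q1 + Q2 + Q3) 2 μT
        ≤ eLpNorm P 2 μT + eLpNorm Q1 2 μT + eLpNorm Q2 2 μT + eLpNorm Q3 2 μT := by
      calc eLpNorm (P + Q1 + Q2 + Q3) 2 μT
          ≤ eLpNorm (P + Q1 + Q2) 2 μT + eLpNorm Q3 2 μT :=
            eLpNorm_add_le ((hmP.add hmQ1).add hmQ2) hmQ3 one_le_two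
        _ ≤ (eLpNorm (P + Q1) 2 μT + eLpNorm Q2 2 μT) + eLpNorm Q3 2 μT :=
            add_le_add_left (eLpNorm_add_le (hmP.add hmQ1) hmQ2 one_le_two) _
        _ ≤ ((eLpNorm P 2 μT + eLpNorm Q1 2 μT) + eLpNorm Q2 2 μT) + eLpNorm Q3 2 μT :=
            add_le_add_left (add_le_add_left (eLpNorm_add_le hmP hmQ1 one_le_two) _) _
    have htotal : eLpNorm (fun t => (h (t - τ) - δ • z' (t - τ))
        - (h (t - σ) - δ • y' (t - σ))) 2 μT
        ≤ ENNReal.ofReal (sT * Real.sqrt η + η + sT * ε₂ + (ε/8 + ε/8)) := by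
      rw [eLpNorm_congr_ae hae]
      refine tri.trans ?_
      rw [ENNReal.ofReal_add (by positivity) (by positivity),
        ENNReal.ofReal_add (by positivity) (by positivity),
        ENNReal.ofReal_add (by positivity) (by positivity),
        ENNReal.ofReal_add (by positivity) (by positivity)]
      exact add_le_add (add_le_add (add_le_add hPb hQ1b) hQ2b) hQ3b
    have hreal : sT * Real.sqrt η + η + sT * ε₂ + (ε/8 + ε/8) ≤ ε := by
      have b1 : sT * Real.sqrt η ≤ ε / 4 := sqrtT_aux hsT0 hε hsqη
      have b2 : η ≤ ε / 4 := (min_le_left _ _).trans (min_le_right _ _)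
      have b3 : sT * ε₂ ≤ ε / 4 := sqrtT_aux hsT0 hε le_rfl
      linarith
    refine ENNReal.toReal_le_of_le_ofReal hε.le ?_
    exact htotal.trans (ENNReal.ofReal_le_ofReal hreal)
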